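/- Let s ⊂ gl_n(F) be a Cartan subalgebra and x ∈ ℚ^n with (τ + ad(x̃))(s) ⊆ s, and set s(0) := s ∩ ker(τ + ad(x̃)). Then for y ∈ ℚ^n one has (τ + ad(ỹ))(s) ⊆ s if and only if x̃ − ỹ ∈ s(0). -/

import Mathlib

noncomputable section

open Polynomial Matrix

attribute [local instance 100] LieRing.ofAssociativeRing

variable {k : Type*} [Field k]

/-- The derivation `τ = z·d/dz` on `k((z))`, acting coefficientwise by `n`. -/
def tauF (f : LaurentSeries k) : LaurentSeries k :=
  ⟨fun n => (n : k) * f.coeff n,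
    f.isPWO_support'.mono (fun n hn => by
      simp only [Function.mem_support, ne_eq] at hn ⊢
      exact fun h => hn (by rw [h, mul_zero]))⟩

/-- For `x ∈ ℚ^n`, the constant diagonal matrix `x̃ = diag(x₁, …, xₙ)`. -/
def diagQ {n : ℕ} (x : Fin n → ℚ) : Matrix (Fin n) (Fin n) (LaurentSeries k) :=
  Matrix.diagonal fun i => HahnSeries.C ((x i : k))

/-- The operator `τ + ad(x̃)` on `gl_n(F)`. -/
def DD {n : ℕ} (x : Fin n → ℚ) (A : Matrix (Fin n) (Fin n) (LaurentSeries k)) :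
    Matrix (Fin n) (Fin n) (LaurentSeries k) :=
  A.map tauF + diagQ x * A - A * diagQ x

/-- A Cartan subalgebra of `gl_n(F)`: a commutative, self-normalizing Lie subalgebra. -/
def IsCartanLS {n : ℕ} (s : LieSubalgebra (LaurentSeries k)
    (Matrix (Fin n) (Fin n) (LaurentSeries k))) : Prop :=
  (∀ a ∈ s, ∀ b ∈ s, a * b = b * a) ∧ s.normalizer = s

lemma tauF_C (c : k) : tauF (HahnSeries.C c) = 0 := by
  ext m
  show (m : k) * (HahnSeries.C c).coeff m = 0
  rcases eq_or_ne m 0 with h | h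
  · simp [h]
  · simp [HahnSeries.C_apply, HahnSeries.coeff_single_of_ne h]

lemma tauF_zero : tauF (0 : LaurentSeries k) = 0 := by
  simpa using tauF_C (0 : k)

lemma map_tauF_diag_sub {n : ℕ} (x y : Fin n → ℚ) :
    (diagQ (k := k) x - diagQ (k := k) y).map tauF = 0 := by
  ext i j
  simp only [Matrix.map_apply, Matrix.zero_apply, diagQ, Matrix.sub_apply,
    Matrix.diagonal_apply]
  rcases eq_or_ne i j with h | h
  · rw [if_pos h, if_pos h, ← map_sub, tauF_C]
  · simp [h, tauF_zero]

lemma DD_diag_sub {n : ℕ} (x y : Fin n → ℚ) :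
    DD x (diagQ (k := k) x - diagQ (k := k) y) = 0 := by
  have hcd : diagQ (k := k) x * diagQ y = diagQ y * diagQ x := by
    simp [diagQ, Matrix.diagonal_mul_diagonal, mul_comm]
  rw [DD, map_tauF_diag_sub, mul_sub, sub_mul, hcd]
  abel

lemma DD_sub_DD {n : ℕ} (x y : Fin n → ℚ)
    (a : Matrix (Fin n) (Fin n) (LaurentSeries k)) :
    DD x a - DD y a = ⁅diagQ (k := k) x - diagQ (k := k) y, a⁆ := by
  simp only [DD, Ring.lie_def, sub_mul, mul_sub]
  abel

/-- if `s` is a Cartan subalgebra with `(τ + ad x̃)(s) ⊆ s` and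
`s(0) := s ∩ ker (τ + ad x̃)`, then for `y ∈ ℚ^n` one has `(τ + ad ỹ)(s) ⊆ s`
iff `x̃ − ỹ ∈ s(0)`. -/
theorem stmt2 [IsAlgClosed k] [CharZero k] {n : ℕ}
    (s : LieSubalgebra (LaurentSeries k) (Matrix (Fin n) (Fin n) (LaurentSeries k)))
    (hs : IsCartanLS s) (x : Fin n → ℚ)
    (hx : ∀ a ∈ s, DD x a ∈ s) (y : Fin n → ℚ) :
    (∀ a ∈ s, DD y a ∈ s) ↔
      ((diagQ (k := k) x - diagQ (k := k) y) ∈ s ∧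
        DD x (diagQ (k := k) x - diagQ (k := k) y) = 0) := by
  constructor
  · intro hy
    refine ⟨?_, DD_diag_sub x y⟩
    have hmem : diagQ (k := k) x - diagQ y ∈ s.normalizer := by
      rw [LieSubalgebra.mem_normalizer_iff]
      intro a ha
      rw [← DD_sub_DD]
      exact s.sub_mem (hx a ha) (hy a ha)
    rwa [hs.2] at hmem
  · rintro ⟨hdmem, -⟩ a ha
    have hcomm := hs.1 _ hdmem a ha
    have h0 : ⁅diagQ (k := k) x - diagQ (k := k) y, a⁆ = 0 := by
      rw [Ring.lie_def, sub_eq_zero, hcomm]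
    have := DD_sub_DD (k := k) x y a
    rw [h0, sub_eq_zero] at this
    rw [← this]
    exact hx a ha
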